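/- If f : ℝ → ℝ is additive and bounded on a Lebesgue measurable set E of positive measure, then f(x) = f(1)·x for all x ∈ ℝ. -/

import Mathlib

open MeasureTheory
open Pointwise

theorem stmt_19 (f : ℝ → ℝ) (hf : ∀ x y, f (x + y) = f x + f y)
    (E : Set ℝ) (hE : MeasurableSet E) (hpos : 0 < volume E)
    (M : ℝ) (hbd : ∀ x ∈ E, |f x| ≤ M) :
    ∀ x, f x = f 1 * x := by
  classical
  set F : ℝ →+ ℝ := AddMonoidHom.mk' f hf with hF
  have hFf : ∀ x, F x = f x := fun _ => rfl
  -- Steinhaus: E - E is a neighborhood of 0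
  have hnhds : E - E ∈ nhds (0 : ℝ) :=
    Measure.sub_mem_nhds_zero_of_addHaar_pos volume E hE hpos
  obtain ⟨δ, hδ, hball⟩ := Metric.mem_nhds_iff.mp hnhds
  -- f is bounded by 2M on the ball
  have hbd2 : ∀ x, |x| < δ → |f x| ≤ 2 * M := by
    intro x hx
    have hxm : x ∈ E - E := hball (by simpa [Real.dist_eq] using hx)
    obtain ⟨a, ha, b, hb, rfl⟩ := hxm
    have : f (a - b) = f a - f b := by
      have := hf (a - b) b
      simp only [sub_add_cancel] at this
      linarith
    rw [this]
    calc |f a - f b| ≤ |f a| + |f b| := abs_sub _ _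
      _ ≤ M + M := add_le_add (hbd a ha) (hbd b hb)
      _ = 2 * M := by ring
  have hM0 : 0 ≤ 2 * M := le_trans (abs_nonneg _) (hbd2 0 (by simpa using hδ))
  -- continuity of F at 0
  have hcont0 : ContinuousAt F 0 := by
    rw [Metric.continuousAt_iff]
    intro ε hε
    obtain ⟨n, hn⟩ := exists_nat_gt (2 * M / ε)
    have hn0 : (0 : ℝ) < n := lt_of_le_of_lt (div_nonneg hM0 hε.le) hn
    refine ⟨δ / n, div_pos hδ hn0, ?_⟩
    intro x hx
    rw [Real.dist_eq, sub_zero] at hx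
    have hnx : |(n : ℝ) * x| < δ := by
      rw [abs_mul, abs_of_nonneg hn0.le]
      calc (n : ℝ) * |x| < n * (δ / n) := by
            exact mul_lt_mul_of_pos_left hx hn0
        _ = δ := by field_simp
    have hnn : n ≠ 0 := by exact_mod_cast hn0.ne'
    have hfs : f ((n : ℝ) * x) = n * f x := by
      have := map_nsmul F n x
      simpa [hFf, nsmul_eq_mul] using this
    have h1 : |(n : ℝ) * f x| ≤ 2 * M := by rw [← hfs]; exact hbd2 _ hnx
    have h2 : |f x| ≤ 2 * M / n := by
      rw [abs_mul, abs_of_nonneg hn0.le] at h1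
      rw [le_div_iff₀ hn0]
      linarith
    have h3 : 2 * M / n < ε := by
      rw [div_lt_iff₀ hn0]
      have := (div_lt_iff₀ hε).mp hn
      linarith
    have : F x = f x := rfl
    simp only [Real.dist_eq, map_zero, sub_zero, this]
    exact lt_of_le_of_lt h2 h3
  have hcont : Continuous F := continuous_of_continuousAt_zero F hcont0
  intro x
  have := (F.toRealLinearMap hcont).map_smul x 1
  simp only [smul_eq_mul, mul_one, AddMonoidHom.coe_toRealLinearMap] at this
  rw [hFf] at this
  rw [this, hFf, mul_comm]
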